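/- Let M = (a b; c d) ∈ Sp(2g,ℤ) in g×g block form. The map on characteristics (ε,δ) ↦ (dε − cδ + diag(cᵗd), −bε + aδ + diag(aᵗb)) mod 2 preserves the parity of characteristics: [ε,δ] is even if and only if its image is even. -/
import Mathlib

open scoped Matrix

section CharParityAux

open Matrix

lemma z2_sq (a : ZMod 2) : a * a = a := by revert a; decide
lemma z2_add_self (a : ZMod 2) : a + a = 0 := by revert a; decide
lemma z2_neg (a : ZMod 2) : -a = a := by revert a; decide
lemma z2_aba (a b : ZMod 2) : a * b * a = a * b := by
  rw [mul_comm a b, mul_assoc, z2_sq]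

lemma sum_symm {g : ℕ} (f : Fin g → Fin g → ZMod 2) (h : ∀ i j, f i j = f j i) :
    ∑ i, ∑ j, f i j = ∑ i, f i i := by
  classical
  rw [← Finset.sum_product' (s := Finset.univ) (t := Finset.univ)]
  rw [← Finset.diag_union_offDiag, Finset.sum_union (Finset.disjoint_diag_offDiag _),
    Finset.sum_diag]
  have h0 : (∑ p ∈ Finset.univ.offDiag, f (p : Fin g × Fin g).1 p.2) = 0 := by
    refine Finset.sum_involution (fun p _ => (p.2, p.1)) ?_ ?_ ?_ ?_
    · intro p _; rw [h p.2 p.1]; exact z2_add_self _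
    · intro p hp _ hEq
      rw [Finset.mem_offDiag] at hp
      exact hp.2.2 (congrArg Prod.snd hEq)
    · intro p hp
      rw [Finset.mem_offDiag] at hp ⊢
      exact ⟨Finset.mem_univ _, Finset.mem_univ _, fun hh => hp.2.2 hh.symm⟩
    · intro p _; rfl
  rw [h0, add_zero]

variable {g : ℕ}

lemma mat_add_self (X : Matrix (Fin g) (Fin g) (ZMod 2)) : X + X = 0 := by
  ext i j; exact z2_add_self _

lemma vec_add_self (x : Fin g → ZMod 2) : x + x = 0 := by
  funext i; exact z2_add_self _

lemma vec_sub_eq_add (x y : Fin g → ZMod 2) : x - y = x + y := by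
  funext i
  show x i - y i = x i + y i
  rw [sub_eq_add_neg, z2_neg]

lemma vec_neg_eq (x : Fin g → ZMod 2) : -x = x := by
  funext i; exact z2_neg _

lemma mat_sub_eq_add (X Y : Matrix (Fin g) (Fin g) (ZMod 2)) : X - Y = X + Y := by
  ext i j
  show X i j - Y i j = X i j + Y i j
  rw [sub_eq_add_neg, z2_neg]

lemma symm_entry {S : Matrix (Fin g) (Fin g) (ZMod 2)} (hS : Sᵀ = S) (i j : Fin g) :
    S j i = S i j := by
  conv_lhs => rw [← hS]
  rfl

lemma quadform (S : Matrix (Fin g) (Fin g) (ZMod 2)) (hS : Sᵀ = S) (x : Fin g → ZMod 2) :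
    x ⬝ᵥ S *ᵥ x = (fun i => S i i) ⬝ᵥ x := by
  have h1 : x ⬝ᵥ S *ᵥ x = ∑ i, ∑ j, x i * S i j * x j := by
    simp [dotProduct, mulVec, Finset.mul_sum, mul_assoc]
  rw [h1, sum_symm (fun i j => x i * S i j * x j)
    (fun i j => by show x i * S i j * x j = x j * S j i * x i
                   rw [symm_entry hS i j]; ring)]
  refine Finset.sum_congr rfl fun i _ => ?_
  show x i * S i i * x i = S i i * x i
  rw [z2_aba, mul_comm]

lemma diag_mulVec (T S : Matrix (Fin g) (Fin g) (ZMod 2)) (hS : Sᵀ = S) :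
    T *ᵥ (fun i => S i i) = fun i => (T * S * Tᵀ) i i := by
  funext i
  have h1 : (T * S * Tᵀ) i i = ∑ j, ∑ k, T i j * S j k * T i k := by
    simp [Matrix.mul_apply, Finset.sum_mul, transpose_apply, mul_assoc]
    rw [Finset.sum_comm]
  rw [h1, sum_symm (fun j k => T i j * S j k * T i k)
    (fun j k => by show T i j * S j k * T i k = T i k * S k j * T i j
                   rw [symm_entry hS j k]; ring)]
  simp only [mulVec, dotProduct]
  exact Finset.sum_congr rfl fun j _ => (z2_aba _ _).symm

lemma diag_dot (S Y : Matrix (Fin g) (Fin g) (ZMod 2)) (hS : Sᵀ = S) (hY : Yᵀ = Y) :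
    (fun i => S i i) ⬝ᵥ (fun i => Y i i) = (S * Y).trace := by
  have h1 : (S * Y).trace = ∑ i, ∑ j, S i j * Y j i := by
    simp [Matrix.trace, Matrix.mul_apply, Matrix.diag]
  rw [h1, sum_symm (fun i j => S i j * Y j i)
    (fun i j => by show S i j * Y j i = S j i * Y i j
                   rw [symm_entry hS i j, symm_entry hY j i])]
  rfl

lemma trace_sq (X : Matrix (Fin g) (Fin g) (ZMod 2)) : (X * X).trace = X.trace := by
  have h1 : (X * X).trace = ∑ i, ∑ j, X i j * X j i := by
    simp [Matrix.trace, Matrix.mul_apply, Matrix.diag]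
  rw [h1, sum_symm (fun i j => X i j * X j i)
    (fun i j => by show X i j * X j i = X j i * X i j; exact mul_comm _ _)]
  simp only [Matrix.trace, Matrix.diag]
  exact Finset.sum_congr rfl fun i _ => z2_sq _

lemma mulVec_dot (T : Matrix (Fin g) (Fin g) (ZMod 2)) (x w : Fin g → ZMod 2) :
    (T *ᵥ x) ⬝ᵥ w = x ⬝ᵥ (Tᵀ *ᵥ w) := by
  rw [dotProduct_comm, dotProduct_mulVec, ← mulVec_transpose, dotProduct_comm]

lemma sp_blocks {a b c d : Matrix (Fin g) (Fin g) ℤ}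
    (h : Matrix.fromBlocks a b c d ∈ Matrix.symplecticGroup (Fin g) ℤ) :
    a * bᵀ = b * aᵀ ∧ a * dᵀ - b * cᵀ = 1 ∧ c * dᵀ = d * cᵀ := by
  rw [SymplecticGroup.mem_iff, Matrix.J, Matrix.fromBlocks_transpose,
    Matrix.fromBlocks_multiply, Matrix.fromBlocks_multiply] at h
  have h11 := congrArg Matrix.toBlocks₁₁ h
  have h12 := congrArg Matrix.toBlocks₁₂ h
  have h22 := congrArg Matrix.toBlocks₂₂ h
  simp only [Matrix.toBlocks_fromBlocks₁₁, Matrix.toBlocks_fromBlocks₁₂,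
    Matrix.toBlocks_fromBlocks₂₂, Matrix.mul_zero, Matrix.mul_one, Matrix.mul_neg,
    zero_add, add_zero, neg_mul, ← sub_eq_add_neg] at h11 h12 h22
  refine ⟨(sub_eq_zero.mp h11).symm, ?_, (sub_eq_zero.mp h22).symm⟩
  rw [show a * dᵀ - b * cᵀ = -(b * cᵀ - a * dᵀ) from (neg_sub _ _).symm, h12, neg_neg]

end CharParityAux

/-- The standard affine action of an integral symplectic matrix
`M = (a b; c d)` on theta characteristics:
`(ε, δ) ↦ (dε − cδ + diag(cᵗd), −bε + aδ + diag(aᵗb))  (mod 2)`. -/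
def charAction {g : ℕ} (M : Matrix (Fin g ⊕ Fin g) (Fin g ⊕ Fin g) ℤ)
    (ε δ : Fin g → ZMod 2) : (Fin g → ZMod 2) × (Fin g → ZMod 2) :=
  let a := M.toBlocks₁₁
  let b := M.toBlocks₁₂
  let c := M.toBlocks₂₁
  let d := M.toBlocks₂₂
  ((d.map (Int.cast : ℤ → ZMod 2)).mulVec ε -
      (c.map (Int.cast : ℤ → ZMod 2)).mulVec δ +
      fun i => (((c * dᵀ) i i : ℤ) : ZMod 2),
    -(b.map (Int.cast : ℤ → ZMod 2)).mulVec ε +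
      (a.map (Int.cast : ℤ → ZMod 2)).mulVec δ +
      fun i => (((a * bᵀ) i i : ℤ) : ZMod 2))

/-- The symplectic action on characteristics preserves parity: `[ε, δ]` is
even if and only if its image under `M ∈ Sp(2g, ℤ)` is even. -/
theorem charAction_preserves_parity {g : ℕ}
    (M : Matrix (Fin g ⊕ Fin g) (Fin g ⊕ Fin g) ℤ)
    (hM : M ∈ Matrix.symplecticGroup (Fin g) ℤ) (ε δ : Fin g → ZMod 2) :
    (∑ i, ε i * δ i = 0) ↔
      (∑ i, (charAction M ε δ).1 i * (charAction M ε δ).2 i = 0) := by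
  classical
  open Matrix in
  set a := M.toBlocks₁₁ with ha
  set b := M.toBlocks₁₂ with hb
  set c := M.toBlocks₂₁ with hc
  set d := M.toBlocks₂₂ with hd
  have hMb : Matrix.fromBlocks a b c d = M := Matrix.fromBlocks_toBlocks M
  obtain ⟨hab, hadbc, hcd⟩ := sp_blocks (show Matrix.fromBlocks a b c d ∈ _ by rwa [hMb])
  have hMt : Matrix.fromBlocks aᵀ cᵀ bᵀ dᵀ ∈ Matrix.symplecticGroup (Fin g) ℤ := by
    rw [← Matrix.fromBlocks_transpose, hMb]
    exact SymplecticGroup.transpose_mem hM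
  obtain ⟨hac, hadcb, hbd⟩ := sp_blocks hMt
  simp only [Matrix.transpose_transpose] at hac hadcb hbd
  -- hac : aᵀ * c = cᵀ * a ;  hadcb : aᵀ * d - cᵀ * b = 1 ;  hbd : bᵀ * d = dᵀ * b
  -- reduce mod 2
  set φ : ℤ →+* ZMod 2 := Int.castRingHom (ZMod 2) with hφ
  set Φ : Matrix (Fin g) (Fin g) ℤ →+* Matrix (Fin g) (Fin g) (ZMod 2) := φ.mapMatrix with hΦ
  have hΦdef : ∀ x : Matrix (Fin g) (Fin g) ℤ, Φ x = x.map (Int.cast : ℤ → ZMod 2) := fun x => rfl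
  have hΦt : ∀ x : Matrix (Fin g) (Fin g) ℤ, Φ (xᵀ) = (Φ x)ᵀ := by
    intro x
    rw [hΦdef, hΦdef, Matrix.transpose_map]
  set A := a.map (Int.cast : ℤ → ZMod 2) with hA
  set B := b.map (Int.cast : ℤ → ZMod 2) with hB
  set C := c.map (Int.cast : ℤ → ZMod 2) with hC
  set D := d.map (Int.cast : ℤ → ZMod 2) with hD
  have RAB : A * Bᵀ = B * Aᵀ := by
    have := congrArg Φ hab
    rw [_root_.map_mul Φ, _root_.map_mul Φ, hΦt, hΦt] at this
    simpa only [hΦdef, ← hA, ← hB] using this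
  have RCD : C * Dᵀ = D * Cᵀ := by
    have := congrArg Φ hcd
    rw [_root_.map_mul Φ, _root_.map_mul Φ, hΦt, hΦt] at this
    simpa only [hΦdef, ← hC, ← hD] using this
  have RAC : Aᵀ * C = Cᵀ * A := by
    have := congrArg Φ hac
    rw [_root_.map_mul Φ, _root_.map_mul Φ, hΦt, hΦt] at this
    simpa only [hΦdef, ← hA, ← hC] using this
  have RBD : Bᵀ * D = Dᵀ * B := by
    have := congrArg Φ hbd
    rw [_root_.map_mul Φ, _root_.map_mul Φ, hΦt, hΦt] at this
    simpa only [hΦdef, ← hB, ← hD] using this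
  have RAD : Aᵀ * D = 1 + Cᵀ * B := by
    have := congrArg Φ hadcb
    rw [_root_.map_sub Φ, _root_.map_mul Φ, _root_.map_mul Φ, _root_.map_one Φ, hΦt, hΦt] at this
    simp only [hΦdef, ← hA, ← hB, ← hC, ← hD] at this
    rw [mat_sub_eq_add] at this
    calc Aᵀ * D = Aᵀ * D + (Cᵀ * B + Cᵀ * B) := by rw [mat_add_self, add_zero]
    _ = (Aᵀ * D + Cᵀ * B) + Cᵀ * B := by rw [add_assoc]
    _ = 1 + Cᵀ * B := by rw [this]
  have R1 : Dᵀ * A = 1 + Bᵀ * C := by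
    have := congrArg Matrix.transpose RAD
    rwa [Matrix.transpose_mul, Matrix.transpose_add, Matrix.transpose_one,
      Matrix.transpose_mul, Matrix.transpose_transpose, Matrix.transpose_transpose] at this
  -- abbreviations over ZMod 2
  have hABm : (a * bᵀ).map (Int.cast : ℤ → ZMod 2) = A * Bᵀ := by
    rw [← hΦdef, _root_.map_mul Φ, hΦt]
    simp only [hΦdef, ← hA, ← hB]
  have hCDm : (c * dᵀ).map (Int.cast : ℤ → ZMod 2) = C * Dᵀ := by
    rw [← hΦdef, _root_.map_mul Φ, hΦt]
    simp only [hΦdef, ← hC, ← hD]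
  have hE1 : (charAction M ε δ).1 = D *ᵥ ε + C *ᵥ δ + (fun i => (C * Dᵀ) i i) := by
    have h0 : (charAction M ε δ).1
        = D *ᵥ ε - C *ᵥ δ + (fun i => (((c * dᵀ) i i : ℤ) : ZMod 2)) := rfl
    rw [h0, vec_sub_eq_add]
    congr 1
    funext i
    show (((c * dᵀ) i i : ℤ) : ZMod 2) = (C * Dᵀ) i i
    rw [← hCDm]
    rfl
  have hE2 : (charAction M ε δ).2 = B *ᵥ ε + A *ᵥ δ + (fun i => (A * Bᵀ) i i) := by
    have h0 : (charAction M ε δ).2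
        = -(B *ᵥ ε) + A *ᵥ δ + (fun i => (((a * bᵀ) i i : ℤ) : ZMod 2)) := rfl
    rw [h0, vec_neg_eq]
    congr 1
    funext i
    show (((a * bᵀ) i i : ℤ) : ZMod 2) = (A * Bᵀ) i i
    rw [← hABm]
    rfl
  -- symmetry facts
  have hsym_ab : (A * Bᵀ)ᵀ = A * Bᵀ := by
    rw [Matrix.transpose_mul, Matrix.transpose_transpose, ← RAB]
  have hsym_cd : (C * Dᵀ)ᵀ = C * Dᵀ := by
    rw [Matrix.transpose_mul, Matrix.transpose_transpose, ← RCD]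
  have hsym_db : (Dᵀ * B)ᵀ = Dᵀ * B := by
    rw [Matrix.transpose_mul, Matrix.transpose_transpose, RBD]
  have hsym_ca : (Cᵀ * A)ᵀ = Cᵀ * A := by
    rw [Matrix.transpose_mul, Matrix.transpose_transpose, RAC]
  -- the nine terms
  have hT11 : (D *ᵥ ε) ⬝ᵥ (B *ᵥ ε) = (fun i => (Dᵀ * B) i i) ⬝ᵥ ε := by
    rw [mulVec_dot, Matrix.mulVec_mulVec, quadform _ hsym_db]
  have hT13 : (D *ᵥ ε) ⬝ᵥ (fun i => (A * Bᵀ) i i)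
      = (fun i => (Dᵀ * (A * Bᵀ) * D) i i) ⬝ᵥ ε := by
    rw [mulVec_dot, diag_mulVec _ _ hsym_ab, Matrix.transpose_transpose, dotProduct_comm]
  have hT31 : (fun i => (C * Dᵀ) i i) ⬝ᵥ (B *ᵥ ε)
      = (fun i => (Bᵀ * (C * Dᵀ) * B) i i) ⬝ᵥ ε := by
    rw [dotProduct_comm, mulVec_dot, diag_mulVec _ _ hsym_cd, Matrix.transpose_transpose,
      dotProduct_comm]
  have hT22 : (C *ᵥ δ) ⬝ᵥ (A *ᵥ δ) = (fun i => (Cᵀ * A) i i) ⬝ᵥ δ := by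
    rw [mulVec_dot, Matrix.mulVec_mulVec, quadform _ hsym_ca]
  have hT23 : (C *ᵥ δ) ⬝ᵥ (fun i => (A * Bᵀ) i i)
      = (fun i => (Cᵀ * (A * Bᵀ) * C) i i) ⬝ᵥ δ := by
    rw [mulVec_dot, diag_mulVec _ _ hsym_ab, Matrix.transpose_transpose, dotProduct_comm]
  have hT32 : (fun i => (C * Dᵀ) i i) ⬝ᵥ (A *ᵥ δ)
      = (fun i => (Aᵀ * (C * Dᵀ) * A) i i) ⬝ᵥ δ := by
    rw [dotProduct_comm, mulVec_dot, diag_mulVec _ _ hsym_cd, Matrix.transpose_transpose,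
      dotProduct_comm]
  -- the three vanishing groups and the cross term
  have e1 : Dᵀ * (A * Bᵀ) * D = Dᵀ * B + Bᵀ * C * (Dᵀ * B) := by
    have h' : Dᵀ * (A * Bᵀ) * D = (Dᵀ * A) * (Bᵀ * D) := by noncomm_ring
    rw [h', R1, RBD]
    noncomm_ring
  have e2 : Bᵀ * (C * Dᵀ) * B = Bᵀ * C * (Dᵀ * B) := by noncomm_ring
  have hMe0 : Dᵀ * B + Dᵀ * (A * Bᵀ) * D + Bᵀ * (C * Dᵀ) * B = 0 := by
    rw [e1, e2]
    calc Dᵀ * B + (Dᵀ * B + Bᵀ * C * (Dᵀ * B)) + Bᵀ * C * (Dᵀ * B)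
        = (Dᵀ * B + Dᵀ * B) + (Bᵀ * C * (Dᵀ * B) + Bᵀ * C * (Dᵀ * B)) := by abel
      _ = 0 := by rw [mat_add_self, mat_add_self, add_zero]
  have e3 : Cᵀ * (A * Bᵀ) * C = (Cᵀ * A) * (Bᵀ * C) := by noncomm_ring
  have e4 : Aᵀ * (C * Dᵀ) * A = Cᵀ * A + (Cᵀ * A) * (Bᵀ * C) := by
    have h' : Aᵀ * (C * Dᵀ) * A = (Aᵀ * C) * (Dᵀ * A) := by noncomm_ring
    rw [h', RAC, R1]
    noncomm_ring
  have hMd0 : Cᵀ * A + Cᵀ * (A * Bᵀ) * C + Aᵀ * (C * Dᵀ) * A = 0 := by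
    rw [e3, e4]
    calc Cᵀ * A + (Cᵀ * A) * (Bᵀ * C) + (Cᵀ * A + (Cᵀ * A) * (Bᵀ * C))
        = (Cᵀ * A + Cᵀ * A) + ((Cᵀ * A) * (Bᵀ * C) + (Cᵀ * A) * (Bᵀ * C)) := by abel
      _ = 0 := by rw [mat_add_self, mat_add_self, add_zero]
  have hEps : (D *ᵥ ε) ⬝ᵥ (B *ᵥ ε) + (D *ᵥ ε) ⬝ᵥ (fun i => (A * Bᵀ) i i)
      + (fun i => (C * Dᵀ) i i) ⬝ᵥ (B *ᵥ ε) = 0 := by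
    rw [hT11, hT13, hT31, ← add_dotProduct, ← add_dotProduct]
    have hdv : ((fun i => (Dᵀ * B) i i) + fun i => (Dᵀ * (A * Bᵀ) * D) i i)
        + (fun i => (Bᵀ * (C * Dᵀ) * B) i i)
        = fun i => (Dᵀ * B + Dᵀ * (A * Bᵀ) * D + Bᵀ * (C * Dᵀ) * B) i i := rfl
    rw [hdv, hMe0]
    simp
  have hDel : (C *ᵥ δ) ⬝ᵥ (A *ᵥ δ) + (C *ᵥ δ) ⬝ᵥ (fun i => (A * Bᵀ) i i)
      + (fun i => (C * Dᵀ) i i) ⬝ᵥ (A *ᵥ δ) = 0 := by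
    rw [hT22, hT23, hT32, ← add_dotProduct, ← add_dotProduct]
    have hdv : ((fun i => (Cᵀ * A) i i) + fun i => (Cᵀ * (A * Bᵀ) * C) i i)
        + (fun i => (Aᵀ * (C * Dᵀ) * A) i i)
        = fun i => (Cᵀ * A + Cᵀ * (A * Bᵀ) * C + Aᵀ * (C * Dᵀ) * A) i i := rfl
    rw [hdv, hMd0]
    simp
  have hCross : (D *ᵥ ε) ⬝ᵥ (A *ᵥ δ) + (C *ᵥ δ) ⬝ᵥ (B *ᵥ ε) = ε ⬝ᵥ δ := by
    rw [mulVec_dot, Matrix.mulVec_mulVec, dotProduct_comm ((C : Matrix (Fin g) (Fin g) (ZMod 2)) *ᵥ δ),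
      mulVec_dot, Matrix.mulVec_mulVec, ← dotProduct_add, ← Matrix.add_mulVec]
    have hsum : Dᵀ * A + Bᵀ * C = 1 := by
      rw [R1]
      calc 1 + Bᵀ * C + Bᵀ * C = 1 + (Bᵀ * C + Bᵀ * C) := by abel
        _ = 1 := by rw [mat_add_self, add_zero]
    rw [hsum, Matrix.one_mulVec]
  have hConst : (fun i => (C * Dᵀ) i i) ⬝ᵥ (fun i => (A * Bᵀ) i i) = 0 := by
    rw [diag_dot _ _ hsym_cd hsym_ab]
    have h' : (C * Dᵀ) * (A * Bᵀ) = C * (Dᵀ * A * Bᵀ) := by noncomm_ring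
    rw [h', Matrix.trace_mul_comm]
    have h'' : Dᵀ * A * Bᵀ * C = Bᵀ * C + (Bᵀ * C) * (Bᵀ * C) := by
      have h3 : Dᵀ * A * Bᵀ * C = (Dᵀ * A) * (Bᵀ * C) := by noncomm_ring
      rw [h3, R1]
      noncomm_ring
    rw [h'', Matrix.trace_add, trace_sq]
    exact z2_add_self _
  -- put everything together
  have key : (charAction M ε δ).1 ⬝ᵥ (charAction M ε δ).2 = ε ⬝ᵥ δ := by
    rw [hE1, hE2]
    simp only [add_dotProduct, dotProduct_add]
    linear_combination hEps + hDel + hCross + hConst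
  have key' : (∑ i, (charAction M ε δ).1 i * (charAction M ε δ).2 i) = ∑ i, ε i * δ i := key
  rw [key']
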